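/- For each integer n ≥ 12 with n ≡ 0 (mod 6), there exists a K_3-divisible graph G of order n whose complement has exactly n edges and which has no K_3-decomposition. -/

import Mathlib

def hrel (n : ℕ) (u v : Fin n) : Prop :=
  (u.val = 0 ∧ 7 ≤ v.val) ∨ (v.val = 0 ∧ 7 ≤ u.val) ∨
  (u.val = 5 ∧ v.val = 6) ∨ (u.val = 6 ∧ v.val = 5) ∨
  (1 ≤ u.val ∧ u.val ≤ 4 ∧ 1 ≤ v.val ∧ v.val ≤ 4 ∧ u.val ≠ v.val)

instance (n : ℕ) : DecidableRel (hrel n) := fun u v => by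
  unfold hrel; infer_instance

def HG (n : ℕ) : SimpleGraph (Fin n) where
  Adj := hrel n
  symm := ⟨by intro u v h; unfold hrel at *; omega⟩
  loopless := ⟨by intro u h; unfold hrel at h; omega⟩

instance (n : ℕ) : DecidableRel (HG n).Adj := fun u v =>
  inferInstanceAs (Decidable (hrel n u v))

lemma HG_adj {n : ℕ} (u v : Fin n) : (HG n).Adj u v ↔ hrel n u v := Iff.rfl

lemma degHG {n : ℕ} (hn : 12 ≤ n) (v : Fin n) :
    (HG n).degree v = if v.val = 0 then n - 7 else if v.val ≤ 4 then 3 else 1 := by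
  rcases Nat.lt_or_ge v.val 1 with h0 | h1
  · -- v.val = 0
    have hv0 : v.val = 0 := by omega
    have : (HG n).neighborFinset v = Finset.Ici (⟨7, by omega⟩ : Fin n) := by
      ext u
      simp only [SimpleGraph.mem_neighborFinset, HG_adj, hrel, Finset.mem_Ici, Fin.le_def]
      omega
    rw [SimpleGraph.degree, this, Fin.card_Ici]
    simp [hv0]
  rcases Nat.lt_or_ge v.val 5 with h4 | h5
  · -- 1 ≤ v.val ≤ 4
    have : (HG n).neighborFinset v =
        (Finset.Icc (⟨1, by omega⟩ : Fin n) (⟨4, by omega⟩ : Fin n)).erase v := by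
      ext u
      simp only [SimpleGraph.mem_neighborFinset, HG_adj, hrel, Finset.mem_erase,
        Finset.mem_Icc, Fin.le_def, ne_eq, Fin.ext_iff]
      omega
    rw [SimpleGraph.degree, this, Finset.card_erase_of_mem, Fin.card_Icc,
      if_neg (by omega), if_pos (by omega)]
    · rfl
    · rw [Finset.mem_Icc]
      exact ⟨Fin.le_def.mpr (show 1 ≤ v.val by omega),
        Fin.le_def.mpr (show v.val ≤ 4 by omega)⟩
  rcases Nat.lt_or_ge v.val 6 with h5' | h6
  · -- v.val = 5
    have : (HG n).neighborFinset v = {(⟨6, by omega⟩ : Fin n)} := by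
      ext u
      simp only [SimpleGraph.mem_neighborFinset, HG_adj, hrel, Finset.mem_singleton,
        Fin.ext_iff]
      omega
    rw [SimpleGraph.degree, this, Finset.card_singleton,
      if_neg (by omega), if_neg (by omega)]
  rcases Nat.lt_or_ge v.val 7 with h6' | h7
  · -- v.val = 6
    have : (HG n).neighborFinset v = {(⟨5, by omega⟩ : Fin n)} := by
      ext u
      simp only [SimpleGraph.mem_neighborFinset, HG_adj, hrel, Finset.mem_singleton,
        Fin.ext_iff]
      omega
    rw [SimpleGraph.degree, this, Finset.card_singleton,
      if_neg (by omega), if_neg (by omega)]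
  · -- v.val ≥ 7
    have : (HG n).neighborFinset v = {(⟨0, by omega⟩ : Fin n)} := by
      ext u
      simp only [SimpleGraph.mem_neighborFinset, HG_adj, hrel, Finset.mem_singleton,
        Fin.ext_iff]
      omega
    rw [SimpleGraph.degree, this, Finset.card_singleton,
      if_neg (by omega), if_neg (by omega)]

lemma sum_degHG {n : ℕ} (hn : 12 ≤ n) : ∑ v : Fin n, (HG n).degree v = 2 * n := by
  have h1 : ∑ v : Fin n, (HG n).degree v
      = ∑ i ∈ Finset.range n, (if i = 0 then n - 7 else if i ≤ 4 then 3 else 1) := by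
    rw [← Fin.sum_univ_eq_sum_range]
    exact Finset.sum_congr rfl fun v _ => degHG hn v
  rw [h1, Finset.range_eq_Ico,
    ← Finset.sum_Ico_consecutive _ (by omega : (0:ℕ) ≤ 5) (by omega : 5 ≤ n)]
  have h2 : ∑ i ∈ Finset.Ico 0 5, (if i = 0 then n - 7 else if i ≤ 4 then 3 else 1)
      = n - 7 + 12 := by
    rw [← Finset.range_eq_Ico]
    simp [Finset.sum_range_succ]
  have h3 : ∑ i ∈ Finset.Ico 5 n, (if i = 0 then n - 7 else if i ≤ 4 then 3 else 1)
      = n - 5 := by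
    rw [Finset.sum_congr rfl (fun i hi => ?_), Finset.sum_const, smul_eq_mul, mul_one,
      Nat.card_Ico]
    rw [Finset.mem_Ico] at hi
    rw [if_neg (by omega), if_neg (by omega)]
  rw [h2, h3]
  omega

lemma card_edgeHG {n : ℕ} (hn : 12 ≤ n) : (HG n).edgeFinset.card = n := by
  have h := SimpleGraph.sum_degrees_eq_twice_card_edges (HG n)
  rw [sum_degHG hn] at h
  omega

instance (n : ℕ) : DecidableRel ((HG n)ᶜ).Adj := fun u v =>
  inferInstanceAs (Decidable (u ≠ v ∧ ¬ hrel n u v))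

lemma degHGc {n : ℕ} (hn : 12 ≤ n) (v : Fin n) :
    ((HG n)ᶜ).degree v = if v.val = 0 then 6 else if v.val ≤ 4 then n - 4 else n - 2 := by
  have h := SimpleGraph.degree_compl (G := HG n) (v := v)
  rw [Fintype.card_fin, degHG hn] at h
  rw [h]
  split_ifs <;> omega

lemma sum_degHGc {n : ℕ} (hn : 12 ≤ n) : ∑ v : Fin n, ((HG n)ᶜ).degree v = n * n - 3 * n := by
  have h1 : ∑ v : Fin n, ((HG n)ᶜ).degree v
      = ∑ i ∈ Finset.range n, (if i = 0 then 6 else if i ≤ 4 then n - 4 else n - 2) := by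
    rw [← Fin.sum_univ_eq_sum_range]
    exact Finset.sum_congr rfl fun v _ => degHGc hn v
  rw [h1, Finset.range_eq_Ico,
    ← Finset.sum_Ico_consecutive _ (by omega : (0:ℕ) ≤ 5) (by omega : 5 ≤ n)]
  have h2 : ∑ i ∈ Finset.Ico 0 5, (if i = 0 then 6 else if i ≤ 4 then n - 4 else n - 2)
      = 6 + 4 * (n - 4) := by
    rw [← Finset.range_eq_Ico]
    simp [Finset.sum_range_succ]
    omega
  have h3 : ∑ i ∈ Finset.Ico 5 n, (if i = 0 then 6 else if i ≤ 4 then n - 4 else n - 2)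
      = (n - 5) * (n - 2) := by
    rw [Finset.sum_congr rfl (fun i hi => ?_), Finset.sum_const, smul_eq_mul,
      Nat.card_Ico]
    rw [Finset.mem_Ico] at hi
    rw [if_neg (by omega), if_neg (by omega)]
  rw [h2, h3]
  have h4 : (n - 5) * (n - 2) = n * n - 7 * n + 10 := by
    cases' Nat.exists_eq_add_of_le (by omega : 5 ≤ n) with k hk
    subst hk
    have e0 : 5 + k - 5 = k := by omega
    have e0' : 5 + k - 2 = k + 3 := by omega
    rw [e0, e0']
    have e1 : (5 + k) * (5 + k) = k * k + 10 * k + 25 := by ring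
    have e2 : k * (k + 3) = k * k + 3 * k := by ring
    omega
  have hnn : 12 * n ≤ n * n := Nat.mul_le_mul_right n hn
  omega

lemma card_edgeHGc {n : ℕ} (hn : 12 ≤ n) :
    2 * ((HG n)ᶜ).edgeFinset.card = n * n - 3 * n := by
  have h := SimpleGraph.sum_degrees_eq_twice_card_edges ((HG n)ᶜ)
  rw [sum_degHGc hn] at h
  omega

/-- A graph is `K_k`-divisible if `k(k-1)/2` divides its number of edges and `k-1`
divides every vertex degree. -/
def KkDivisible {V : Type*} (k : ℕ) (G : SimpleGraph V) : Prop :=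
  (k * (k - 1) / 2) ∣ G.edgeSet.ncard ∧ ∀ x : V, (k - 1) ∣ (G.neighborSet x).ncard

/-- A `K_k`-decomposition of `G`: a set of `k`-cliques of `G` (i.e. subgraphs
isomorphic to `K_k`) such that every edge of `G` lies in exactly one of them. -/
def HasKkDecomposition {V : Type*} (k : ℕ) (G : SimpleGraph V) : Prop :=
  ∃ D : Set (Finset V),
    (∀ A ∈ D, A.card = k ∧ ∀ x ∈ A, ∀ y ∈ A, x ≠ y → G.Adj x y) ∧
    (∀ x y : V, G.Adj x y → ∃! A, A ∈ D ∧ x ∈ A ∧ y ∈ A)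

lemma ncard_eq_card_edgeFinset {V : Type*} [Fintype V] (G : SimpleGraph V)
    [Fintype G.edgeSet] : G.edgeSet.ncard = G.edgeFinset.card := by
  rw [← SimpleGraph.coe_edgeFinset, Set.ncard_coe_finset]

lemma ncard_neighborSet {V : Type*} [Fintype V] (G : SimpleGraph V) (x : V)
    [Fintype (G.neighborSet x)] : (G.neighborSet x).ncard = G.degree x := by
  rw [← Nat.card_coe_set_eq, Nat.card_eq_fintype_card,
    SimpleGraph.card_neighborSet_eq_degree]

/-- For each `n ≥ 12` with `n ≡ 0 (mod 6)` there is a `K_3`-divisible graph of order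
`n` whose complement has exactly `n` edges and which has no `K_3`-decomposition. -/
theorem nondecomposable_K3_zero_mod_six (n : ℕ) (hn : 12 ≤ n) (hmod : n % 6 = 0) :
    ∃ G : SimpleGraph (Fin n), KkDivisible 3 G ∧
      Gᶜ.edgeSet.ncard = n ∧ ¬ HasKkDecomposition 3 G := by
  classical
  refine ⟨(HG n)ᶜ, ⟨?_, ?_⟩, ?_, ?_⟩
  · -- 3 ∣ number of edges
    show (3 * (3 - 1) / 2) ∣ ((HG n)ᶜ).edgeSet.ncard
    norm_num
    rw [ncard_eq_card_edgeFinset]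
    have h := card_edgeHGc hn
    obtain ⟨m, hm⟩ : ∃ m, n = 6 * m := ⟨n / 6, by omega⟩
    subst hm
    have e1 : (6 * m) * (6 * m) = 36 * (m * m) := by ring
    have : ((HG (6 * m))ᶜ).edgeFinset.card = 3 * (6 * (m * m) - 3 * m) := by omega
    exact ⟨_, this⟩
  · -- degrees even
    intro x
    show 2 ∣ _
    rw [ncard_neighborSet, degHGc hn]
    split_ifs <;> omega
  · -- complement has n edges
    have hcc : ((HG n)ᶜ)ᶜ = HG n := compl_compl _
    rw [hcc, ncard_eq_card_edgeFinset]
    exact card_edgeHG hn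
  · -- no decomposition
    rintro ⟨D, hD1, hD2⟩
    set G := (HG n)ᶜ with hG
    have hadj : ∀ u v : Fin n, u ≠ v → ¬ hrel n u v → G.Adj u v := by
      intro u v h1 h2
      exact ⟨h1, h2⟩
    -- the key vertex
    let v0 : Fin n := ⟨0, by omega⟩
    have hv0 : v0.val = 0 := rfl
    -- for every w with 1 ≤ w.val ≤ 4, the triangle on (v0, w) has third vertex of val 5 or 6
    have main : ∀ w : Fin n, 1 ≤ w.val → w.val ≤ 4 →
        ∃ A z, A ∈ D ∧ v0 ∈ A ∧ w ∈ A ∧ z ∈ A ∧ (z.val = 5 ∨ z.val = 6) := by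
      intro w hw1 hw4
      have hadj0w : G.Adj v0 w := by
        refine hadj _ _ (fun h => by rw [Fin.ext_iff, hv0] at h; omega) ?_
        unfold hrel
        rw [hv0]
        omega
      obtain ⟨A, ⟨hAD, h0A, hwA⟩, -⟩ := hD2 v0 w hadj0w
      obtain ⟨hcard, hclique⟩ := hD1 A hAD
      have hnsub : ¬ A ⊆ {v0, w} := by
        intro hsub
        have h2 := Finset.card_le_card hsub
        have h3 : ({v0, w} : Finset (Fin n)).card ≤ 2 :=
          (Finset.card_insert_le _ _).trans (by simp)
        omega
      obtain ⟨z, hzA, hz⟩ := Finset.not_subset.mp hnsub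
      simp only [Finset.mem_insert, Finset.mem_singleton, not_or] at hz
      obtain ⟨hzv0, hzw⟩ := hz
      have hz0 : G.Adj v0 z := hclique v0 h0A z hzA (Ne.symm hzv0)
      have hzwadj : G.Adj w z := hclique w hwA z hzA (Ne.symm hzw)
      have h1 : ¬ hrel n v0 z := hz0.2
      have h2 : ¬ hrel n w z := hzwadj.2
      unfold hrel at h1 h2
      rw [hv0] at h1
      have hzval0 : z.val ≠ 0 := fun h => hzv0 (by rw [Fin.ext_iff, hv0, h])
      have hzwval : z.val ≠ w.val := fun h => hzw (Fin.ext h)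
      exact ⟨A, z, hAD, h0A, hwA, hzA, by omega⟩
    -- two such triangles sharing the third vertex give a contradiction
    have pair : ∀ (w w' z : Fin n), w.val ≠ w'.val →
        1 ≤ w.val → w.val ≤ 4 → 1 ≤ w'.val → w'.val ≤ 4 →
        (z.val = 5 ∨ z.val = 6) →
        ∀ A A', A ∈ D → v0 ∈ A → w ∈ A → z ∈ A →
          A' ∈ D → v0 ∈ A' → w' ∈ A' → z ∈ A' → False := by
      intro w w' z hww' hw1 hw4 hw'1 hw'4 hzval A A' hAD h0A hwA hzA hA'D h0A' hw'A' hzA'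
      have hadj0z : G.Adj v0 z := by
        refine hadj _ _ (fun h => by rw [Fin.ext_iff, hv0] at h; omega) ?_
        unfold hrel
        rw [hv0]
        omega
      obtain ⟨B, -, hBuniq⟩ := hD2 v0 z hadj0z
      have e1 : A = B := hBuniq A ⟨hAD, h0A, hzA⟩
      have e2 : A' = B := hBuniq A' ⟨hA'D, h0A', hzA'⟩
      have eAA' : A = A' := e1.trans e2.symm
      subst eAA'
      -- now {v0, w, w', z} ⊆ A but A.card = 3
      have hcard := (hD1 A hAD).1
      have hsub : ({v0, w, w', z} : Finset (Fin n)) ⊆ A := by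
        intro u hu
        simp only [Finset.mem_insert, Finset.mem_singleton] at hu
        rcases hu with rfl | rfl | rfl | rfl
        exacts [h0A, hwA, hw'A', hzA]
      have hc4 : ({v0, w, w', z} : Finset (Fin n)).card = 4 := by
        rw [Finset.card_insert_of_notMem, Finset.card_insert_of_notMem,
          Finset.card_insert_of_notMem, Finset.card_singleton]
        · simp only [Finset.mem_singleton, Fin.ext_iff]; omega
        · simp only [Finset.mem_insert, Finset.mem_singleton, Fin.ext_iff, not_or]; omega
        · simp only [Finset.mem_insert, Finset.mem_singleton, Fin.ext_iff, not_or, hv0]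
          omega
      have := Finset.card_le_card hsub
      omega
    obtain ⟨A1, z1, hA1, h01, hw1A, hz1A, hz1⟩ :=
      main ⟨1, by omega⟩ (by norm_num) (by norm_num)
    obtain ⟨A2, z2, hA2, h02, hw2A, hz2A, hz2⟩ :=
      main ⟨2, by omega⟩ (by norm_num) (by norm_num)
    obtain ⟨A3, z3, hA3, h03, hw3A, hz3A, hz3⟩ :=
      main ⟨3, by omega⟩ (by norm_num) (by norm_num)
    -- pigeonhole: two of z1, z2, z3 coincide
    have htri : z1.val = z2.val ∨ z1.val = z3.val ∨ z2.val = z3.val := by omega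
    rcases htri with h | h | h
    · cases Fin.ext h
      exact pair ⟨1, by omega⟩ ⟨2, by omega⟩ z1 (by norm_num) (by norm_num) (by norm_num)
        (by norm_num) (by norm_num) hz1 A1 A2 hA1 h01 hw1A hz1A hA2 h02 hw2A hz2A
    · cases Fin.ext h
      exact pair ⟨1, by omega⟩ ⟨3, by omega⟩ z1 (by norm_num) (by norm_num) (by norm_num)
        (by norm_num) (by norm_num) hz1 A1 A3 hA1 h01 hw1A hz1A hA3 h03 hw3A hz3A
    · cases Fin.ext h
      exact pair ⟨2, by omega⟩ ⟨3, by omega⟩ z2 (by norm_num) (by norm_num) (by norm_num)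
        (by norm_num) (by norm_num) hz2 A2 A3 hA2 h02 hw2A hz2A hA3 h03 hw3A hz3A
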